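/- arXiv:2503.11734 — 2 statements merged into one kernel-verified Lean document; each statement's English description precedes it below -/
import Mathlib

section
/- For every integer n ≥ 1, S_{P_n}(2√2) = 1 if n is odd and S_{P_n}(2√2) = 0 if n is even (Rule A). -/
/-- The deterministic random walk `S_n(ξ) = ∑_{j=1}^n (-1)^⌊j·ξ⌋`. -/
noncomputable def S (ξ : ℝ) (n : ℕ) : ℤ :=
  ∑ j ∈ Finset.Icc 1 n, ((Int.negOnePow ⌊(j : ℝ) * ξ⌋ : ℤˣ) : ℤ)

/-- The Pell numbers: `P 0 = 0`, `P 1 = 1`, `P (n+2) = 2·P (n+1) + P n`. -/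
def pell : ℕ → ℕ
  | 0 => 0
  | 1 => 1
  | n + 2 => 2 * pell (n + 1) + pell n

/-- Half-companion Pell numbers. -/
def Hc : ℕ → ℕ
  | 0 => 1
  | n + 1 => Hc n + 2 * pell n

lemma Hc_succ (n : ℕ) : Hc (n + 1) = Hc n + 2 * pell n := rfl

lemma pell_succ (n : ℕ) : pell (n + 1) = Hc n + pell n := by
  induction n with
  | zero => rfl
  | succ m ih =>
      show 2 * pell (m+1) + pell m = Hc (m+1) + pell (m+1)
      rw [Hc_succ]; omega

lemma Hc_odd (n : ℕ) : Hc n % 2 = 1 := by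
  induction n with
  | zero => rfl
  | succ m ih => rw [Hc_succ]; omega

lemma pell_le_Hc (n : ℕ) : pell n ≤ Hc n := by
  induction n with
  | zero => simp [pell, Hc]
  | succ m ih => rw [pell_succ, Hc]; have := Nat.zero_le (pell m); omega

lemma Hc_pos (n : ℕ) : 1 ≤ Hc n := by
  induction n with
  | zero => exact le_refl 1
  | succ m ih => rw [Hc_succ]; omega

lemma pell_pos {n : ℕ} (hn : 1 ≤ n) : 1 ≤ pell n := by
  obtain ⟨m, rfl⟩ := Nat.exists_eq_add_of_le hn
  rw [Nat.add_comm, pell_succ]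
  have := Hc_pos m; omega

lemma two_pell_le (n : ℕ) : 2 * pell n ≤ pell (n + 1) := by
  rw [pell_succ]; have := pell_le_Hc n; omega

lemma Hc_le_two_pell {n : ℕ} (hn : 1 ≤ n) : Hc n ≤ 2 * pell n := by
  obtain ⟨m, rfl⟩ := Nat.exists_eq_add_of_le hn
  rw [Nat.add_comm]; rw [Hc, pell_succ]
  have := Hc_pos m; have := pell_le_Hc m; omega

lemma two_Hc_le {n : ℕ} (hn : 1 ≤ n) : 2 * Hc n ≤ Hc (n + 1) := by
  rw [Hc_succ]; have := Hc_le_two_pell hn; omega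

lemma pell_mono : Monotone pell := by
  apply monotone_nat_of_le_succ
  intro n; rw [pell_succ]; omega

lemma Hc_mono : Monotone Hc := by
  apply monotone_nat_of_le_succ
  intro n; rw [Hc_succ]; omega

lemma pell_strictMonoOn {m n : ℕ} (hm : 1 ≤ m) (hmn : m < n) : pell m < pell n := by
  have h1 : pell (m+1) ≤ pell n := pell_mono hmn
  have := two_pell_le m; have := pell_pos hm; omega

/-- `2 pell m ≤ pell n` for `m < n`. -/
lemma two_pell_le_of_lt {m n : ℕ} (hmn : m < n) : 2 * pell m ≤ pell n := by
  have h1 : pell (m+1) ≤ pell n := pell_mono hmn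
  have := two_pell_le m; omega

lemma two_Hc_le_of_lt {m n : ℕ} (hm : 1 ≤ m) (hmn : m < n) : 2 * Hc m ≤ Hc n := by
  have h1 : Hc (m+1) ≤ Hc n := Hc_mono hmn
  have := two_Hc_le hm; omega

/-- The Pell identity. -/
lemma Hc_sq (n : ℕ) : (Hc n : ℤ)^2 = 2 * (pell n : ℤ)^2 + (-1)^n := by
  induction n with
  | zero => simp [Hc, pell]
  | succ m ih =>
      have h1 : (Hc (m+1) : ℤ) = Hc m + 2 * pell m := by rw [Hc_succ]; push_cast; ring
      have h2 : (pell (m+1) : ℤ) = Hc m + pell m := by rw [pell_succ]; push_cast; ring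
      rw [h1, h2, pow_succ]; ring_nf; ring_nf at ih; linarith

/-- Classification of solutions to `x² - 2y² = ±1`. -/
lemma pell_classify : ∀ y : ℕ, ∀ x : ℕ, 1 ≤ y →
    (x*x = 2*(y*y) + 1 → ∃ m, Even m ∧ x = Hc m ∧ y = pell m) ∧
    (x*x + 1 = 2*(y*y) → ∃ m, Odd m ∧ x = Hc m ∧ y = pell m) := by
  intro y
  induction y using Nat.strong_induction_on with
  | _ y IH =>
    intro x hy
    constructor
    · intro heq
      -- x² = 2y² + 1, y ≥ 1 : x > y, x < 2y
      have hxy : y < x := by nlinarith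
      have hx2y : x < 2*y := by nlinarith
      set x' := 2*y - x with hx'
      set y' := x - y with hy'
      have hx'v : x' + x = 2*y := by omega
      have hy'v : y' + y = x := by omega
      have hy'pos : 1 ≤ y' := by omega
      have hy'lt : y' < y := by omega
      have heq' : x'*x' + 1 = 2*(y'*y') := by nlinarith
      obtain ⟨m, hmo, hxm, hym⟩ := ((IH y' hy'lt x' hy'pos).2) heq'
      refine ⟨m+1, by simpa using hmo.add_one, ?_, ?_⟩
      · rw [Hc_succ]; omega
      · rw [pell_succ]; omega
    · intro heq
      rcases Nat.eq_or_lt_of_le hy with h1 | h2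
      · -- y = 1, x = 1
        have hx1 : x = 1 := by nlinarith
        exact ⟨1, odd_one, by simp [hx1, Hc, pell], by simp [← h1, pell]⟩
      · -- y ≥ 2
        have hxy : y < x := by nlinarith
        have hx2y : x < 2*y := by nlinarith
        set x' := 2*y - x with hx'
        set y' := x - y with hy'
        have hx'v : x' + x = 2*y := by omega
        have hy'v : y' + y = x := by omega
        have hy'pos : 1 ≤ y' := by omega
        have hy'lt : y' < y := by omega
        have heq' : x'*x' = 2*(y'*y') + 1 := by nlinarith
        obtain ⟨m, hme, hxm, hym⟩ := ((IH y' hy'lt x' hy'pos).1) heq'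
        refine ⟨m+1, hme.add_one, ?_, ?_⟩
        · rw [Hc_succ]; omega
        · rw [pell_succ]; omega

section Real
open Real

noncomputable def sq2 : ℝ := Real.sqrt 2

lemma sq2_sq : sq2 ^ 2 = 2 := Real.sq_sqrt (by norm_num)
lemma sq2_pos : 0 < sq2 := Real.sqrt_pos.2 (by norm_num)
lemma sq2_gt_one : 1 < sq2 := by nlinarith [sq2_sq, sq2_pos]

lemma floor_lt_self {j : ℕ} (hj : 1 ≤ j) :
    (⌊(j:ℝ) * (2*sq2)⌋ : ℝ) < (j:ℝ) * (2*sq2) := by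
  have hirr : Irrational ((j:ℝ) * (2*sq2)) := by
    have h1 : Irrational (((2*j : ℕ):ℝ) * sq2) :=
      Irrational.natCast_mul irrational_sqrt_two (by omega)
    have : ((2*j:ℕ):ℝ) * sq2 = (j:ℝ) * (2*sq2) := by push_cast; ring
    rwa [this] at h1
  refine lt_of_le_of_ne (Int.floor_le _) (fun h => ?_)
  exact hirr.ne_int ⌊(j:ℝ) * (2*sq2)⌋ h.symm

lemma floor_nonneg' (j : ℕ) : 0 ≤ ⌊(j:ℝ) * (2*sq2)⌋ :=
  Int.floor_nonneg.2 (by have := sq2_pos; positivity)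


set_option maxHeartbeats 1000000 in
lemma lt_of_sq_lt' {a b : ℝ} (ha : 0 ≤ a) (hb : 0 ≤ b) (h : a^2 < b^2) : a < b := by
  nlinarith

set_option maxHeartbeats 8000000 in
/-- Key pairing lemma. -/
lemma key_pair {n j : ℕ} (hn : 2 ≤ n) (hj1 : 1 ≤ j) (hj2 : j < pell n)
    (hj3 : 2*j ≠ pell n) :
    ⌊(j:ℝ) * (2*sq2)⌋ + ⌊((pell n - j : ℕ):ℝ) * (2*sq2)⌋ = 2 * (Hc n : ℤ) - 1 := by
  have s2 := sq2_sq
  have sp := sq2_pos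
  have s1 := sq2_gt_one
  set N := pell n with hN
  set H := Hc n with hH
  set j' := N - j with hj'
  have hjj' : j + j' = N := by omega
  have hj'1 : 1 ≤ j' := by omega
  have hj'2 : j' < N := by omega
  set x := (j:ℝ) * (2*sq2) with hx
  set y := (j':ℝ) * (2*sq2) with hy
  set k := ⌊x⌋ with hk
  set l := ⌊y⌋ with hl
  have hkx : (k:ℝ) < x := floor_lt_self hj1
  have hxk : x < k + 1 := Int.lt_floor_add_one x
  have hly : (l:ℝ) < y := floor_lt_self hj'1
  have hyl : y < l + 1 := Int.lt_floor_add_one y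
  have hk0 : 0 ≤ k := floor_nonneg' j
  have hl0 : 0 ≤ l := floor_nonneg' j'
  have hk0R : (0:ℝ) ≤ (k:ℝ) := by exact_mod_cast hk0
  have hl0R : (0:ℝ) ≤ (l:ℝ) := by exact_mod_cast hl0
  have hxy : x + y = 2*sq2*(N:ℝ) := by
    rw [hx, hy, ← hjj']; push_cast; ring
  have hH3 : 3 ≤ H := by
    have : Hc 2 ≤ Hc n := Hc_mono hn
    simpa [Hc, pell] using this
  have hN2 : 2 ≤ N := by
    have : pell 2 ≤ pell n := pell_mono hn
    simpa [pell] using this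
  have hNR : (2:ℝ) ≤ (N:ℝ) := by exact_mod_cast hN2
  have hHR : (3:ℝ) ≤ (H:ℝ) := by exact_mod_cast hH3
  have hjR : (j:ℝ) ≤ (N:ℝ) - 1 := by
    have : (j:ℝ) + 1 ≤ (N:ℝ) := by exact_mod_cast hj2
    linarith
  have hjR0 : (1:ℝ) ≤ (j:ℝ) := by exact_mod_cast hj1
  have hsq : (H:ℝ)^2 = 2*(N:ℝ)^2 + (-1)^n := by
    have h2 : ((Hc n : ℤ):ℝ)^2 = ((2 * (pell n : ℤ)^2 + (-1)^n : ℤ):ℝ) := by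
      exact_mod_cast congrArg (Int.cast : ℤ → ℝ) (Hc_sq n)
    push_cast at h2; push_cast; linarith
  have hpm : (-1:ℝ)^n = 1 ∨ (-1:ℝ)^n = -1 := by
    rcases Nat.even_or_odd n with h | h
    · exact Or.inl h.neg_one_pow
    · exact Or.inr h.neg_one_pow
  have e1 : (sq2*(N:ℝ))^2 = 2*(N:ℝ)^2 := by linear_combination ((N:ℝ)^2) * s2
  have hsN0 : (0:ℝ) ≤ sq2*(N:ℝ) := by positivity
  have hlb : sq2 * (N:ℝ) - 1 < (H:ℝ) := by
    have : sq2*(N:ℝ) < (H:ℝ) + 1 := by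
      apply lt_of_sq_lt' hsN0 (by linarith)
      rcases hpm with h | h <;> nlinarith [e1, hsq]
    linarith
  have hpos1 : (0:ℝ) < (H:ℝ) + sq2*(N:ℝ) := by linarith
  have hx2 : x^2 = 8*(j:ℝ)^2 := by rw [hx]; linear_combination (4*(j:ℝ)^2) * s2
  have hxpos : 0 < x := by rw [hx]; positivity
  have hxub : x ≤ 2*sq2*((N:ℝ)-1) := by
    rw [hx]
    have := mul_le_mul_of_nonneg_left hjR (le_of_lt (by positivity : (0:ℝ) < 2*sq2))
    linarith
  -- upper and lower bounds for k + l
  have hkl_ub : k + l ≤ 2*(H:ℤ) := by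
    have h1 : 2*sq2*(N:ℝ) < 2*(H:ℝ) + 1 := by
      have : sq2*(N:ℝ) < (H:ℝ) + 1/2 := by
        apply lt_of_sq_lt' hsN0 (by linarith)
        rcases hpm with h | h <;> nlinarith [e1, hsq]
      linarith
    have h2 : ((k + l : ℤ):ℝ) < 2*(H:ℝ) + 1 := by push_cast; linarith
    have h3 : (k + l : ℤ) < 2*(H:ℤ) + 1 := by exact_mod_cast h2
    omega
  have hkl_lb : 2*(H:ℤ) - 2 ≤ k + l := by
    have h1 : 2*(H:ℝ) - 1 < 2*sq2*(N:ℝ) := by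
      have : (H:ℝ) - 1/2 < sq2*(N:ℝ) := by
        apply lt_of_sq_lt' (by linarith) hsN0
        rcases hpm with h | h <;> nlinarith [e1, hsq]
      linarith
    have h2 : 2*(H:ℝ) - 3 < ((k + l : ℤ):ℝ) := by push_cast; linarith
    have h3 : 2*(H:ℤ) - 3 < (k + l : ℤ) := by exact_mod_cast h2
    omega
  have hcase : k + l = 2*(H:ℤ) - 2 ∨ k + l = 2*(H:ℤ) - 1 ∨ k + l = 2*(H:ℤ) := by omega
  rcases hcase with hE | hgoal | hE
  · -- k + l = 2H - 2 : impossible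
    exfalso
    have hklR : (k:ℝ) + (l:ℝ) = 2*(H:ℝ) - 2 := by exact_mod_cast congrArg (Int.cast : ℤ → ℝ) hE
    rcases Nat.even_or_odd n with hev | hod
    · -- n even : 2N² = H² - 1
      have hsq' : 2*(N:ℝ)^2 = (H:ℝ)^2 - 1 := by rw [hev.neg_one_pow] at hsq; linarith
      have hx_close : (k:ℝ) + 1 - x < 2*(H:ℝ) - 2*sq2*(N:ℝ) := by linarith
      have hx_pos : 0 < (k:ℝ) + 1 - x := by linarith
      have hprod : (2*(H:ℝ) - 2*sq2*(N:ℝ)) * ((H:ℝ) + sq2*(N:ℝ)) = 2 := by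
        linear_combination (-2*(N:ℝ)^2) * s2 + (-2) * hsq'
      set k1 : ℤ := k + 1 with hk1
      have hk1R : (k1:ℝ) = (k:ℝ) + 1 := by rw [hk1]; push_cast; ring
      have hk1x : x < (k1:ℝ) := by rw [hk1R]; linarith
      have hk10 : 0 ≤ k1 := by omega
      set d : ℤ := k1^2 - 8*(j:ℤ)^2 with hd
      have hd1 : 1 ≤ d := by
        have h1 : x^2 < (k1:ℝ)^2 := by nlinarith
        rw [hx2] at h1
        have h2 : 8*((j:ℤ):ℝ)^2 < ((k1:ℤ):ℝ)^2 := by push_cast; push_cast at h1; linarith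
        have h3 : 8*(j:ℤ)^2 < k1^2 := by exact_mod_cast h2
        rw [hd]; linarith
      have hdR : (d:ℝ) = ((k1:ℝ) - x) * ((k1:ℝ) + x) := by
        have h1 : (d:ℝ) = (k1:ℝ)^2 - 8*(j:ℝ)^2 := by rw [hd]; push_cast; ring
        rw [h1, ← hx2]; ring
      have hkey : (d:ℝ) * ((H:ℝ) + sq2*(N:ℝ)) < 2 * ((k1:ℝ) + x) := by
        have h1 : ((k1:ℝ) - x) * ((H:ℝ) + sq2*(N:ℝ))
            < (2*(H:ℝ) - 2*sq2*(N:ℝ)) * ((H:ℝ) + sq2*(N:ℝ)) := by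
          apply mul_lt_mul_of_pos_right _ hpos1
          rw [hk1R]; linarith
        rw [hprod] at h1
        have hpos2 : (0:ℝ) < (k1:ℝ) + x := by rw [hk1R]; linarith
        calc (d:ℝ) * ((H:ℝ) + sq2*(N:ℝ))
            = (((k1:ℝ) - x) * ((H:ℝ) + sq2*(N:ℝ))) * ((k1:ℝ) + x) := by rw [hdR]; ring
          _ < 2 * ((k1:ℝ) + x) := mul_lt_mul_of_pos_right h1 hpos2
      have hd4 : d ≤ 4 := by
        by_contra hcon
        push_neg at hcon
        have h5 : (5:ℝ) ≤ (d:ℝ) := by exact_mod_cast hcon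
        have h6 : 5 * ((H:ℝ) + sq2*(N:ℝ)) ≤ (d:ℝ) * ((H:ℝ) + sq2*(N:ℝ)) :=
          mul_le_mul_of_nonneg_right h5 hpos1.le
        have hk1b : (k1:ℝ) ≤ x + 1 := by rw [hk1R]; linarith
        linarith [hkey, hxub, hlb]
      -- parity analysis on k1
      rcases Int.even_or_odd k1 with ⟨t, ht⟩ | ⟨t, ht⟩
      · -- k1 = 2t, d = 4(t² - 2j²) → d = 4, t² = 2j² + 1
        have ht' : k1 = 2*t := by omega
        set u : ℤ := t^2 - 2*(j:ℤ)^2 with hu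
        have hdu : d = 4*u := by rw [hd, ht', hu]; ring
        have hu1 : u = 1 := by omega
        have ht2 : (t:ℤ)^2 = 2*(j:ℤ)^2 + 1 := by rw [hu] at hu1; linarith
        have ht1 : 1 ≤ t := by omega
        obtain ⟨tn, rfl⟩ := Int.eq_ofNat_of_zero_le (by omega : (0:ℤ) ≤ t)
        have heqn : tn*tn = 2*(j*j) + 1 := by
          have hZ : ((tn:ℤ))*tn = 2*((j:ℤ)*(j:ℤ)) + 1 := by linear_combination ht2
          exact_mod_cast hZ
        obtain ⟨m, hme, htm, hjm⟩ := (pell_classify j tn hj1).1 heqn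
        have hm1 : 1 ≤ m := by
          rcases m with _ | m
          · exfalso; rw [hjm] at hj1; simp [pell] at hj1
          · omega
        have hmn : m < n := by
          by_contra hcc
          push_neg at hcc
          have := pell_mono hcc
          omega
        have hP : 2 * pell m ≤ N := two_pell_le_of_lt hmn
        have hHm : 2 * Hc m ≤ H := two_Hc_le_of_lt hm1 hmn
        have hdcast : (d:ℝ) = 4 := by
          have hd4' : d = 4 := by omega
          rw [hd4']; norm_num
        have hk1v : (k1:ℝ) = 2*((Hc m : ℕ):ℝ) := by
          rw [ht', htm]; push_cast; ring
        have hxv : x = 2*sq2*((pell m : ℕ):ℝ) := by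
          rw [hx, hjm]; push_cast; ring
        have hPR : 2*((pell m : ℕ):ℝ) ≤ (N:ℝ) := by exact_mod_cast hP
        have hHmR : 2*((Hc m : ℕ):ℝ) ≤ (H:ℝ) := by exact_mod_cast hHm
        have hsPR : sq2 * (2*((pell m : ℕ):ℝ)) ≤ sq2 * (N:ℝ) :=
          mul_le_mul_of_nonneg_left hPR sp.le
        rw [hdcast, hk1v, hxv] at hkey
        linarith [hkey, hsPR, hHmR, hpos1]
      · -- k1 = 2t+1, d ≡ 1 mod 8 → d = 1, k1² = 2(2j)² + 1
        obtain ⟨v, hv⟩ := Int.even_mul_succ_self t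
        set w : ℤ := (j:ℤ)^2 with hw
        have hdw : d = 8*v + 1 - 8*w := by
          rw [hd, ht]; linear_combination 4*hv + 8*hw
        have hd1' : d = 1 := by omega
        have hk1sq : k1*k1 = 2*((2*(j:ℤ))*(2*(j:ℤ))) + 1 := by
          have hh : k1^2 - 8*(j:ℤ)^2 = 1 := by rw [← hd]; exact hd1'
          linear_combination hh
        obtain ⟨kn, hkn⟩ := Int.eq_ofNat_of_zero_le (by omega : (0:ℤ) ≤ k1)
        rw [hkn] at hk1sq hkey
        have heqn : kn*kn = 2*((2*j)*(2*j)) + 1 := by exact_mod_cast hk1sq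
        obtain ⟨m, hme, hkm, hjm⟩ := (pell_classify (2*j) kn (by omega)).1 heqn
        have hm1 : 1 ≤ m := by
          rcases m with _ | m
          · exfalso; simp [pell] at hjm; omega
          · omega
        have hmn : m < n := by
          rcases Nat.lt_or_ge m n with h | h
          · exact h
          · exfalso
            have hmn1 : m < n + 1 := by
              by_contra hcc
              push_neg at hcc
              have h1 := pell_mono hcc
              have h2 := two_pell_le n
              omega
            have : m = n := by omega
            rw [this] at hjm; exact hj3 hjm
        have hP : 2 * pell m ≤ N := two_pell_le_of_lt hmn
        have hHm : 2 * Hc m ≤ H := two_Hc_le_of_lt hm1 hmn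
        have hdcast : ((d:ℤ):ℝ) = 1 := by rw [hd1']; norm_num
        have hknv : ((kn:ℤ):ℝ) = ((Hc m : ℕ):ℝ) := by rw [hkm]; norm_cast
        have hxv : x = sq2*((pell m : ℕ):ℝ) := by
          rw [hx, ← hjm]; push_cast; ring
        have hHmR : 2*((Hc m : ℕ):ℝ) ≤ (H:ℝ) := by exact_mod_cast hHm
        have hP2 : 2*((pell m : ℕ):ℝ) ≤ (N:ℝ) := by exact_mod_cast hP
        have hsPR2 : sq2 * (2*((pell m : ℕ):ℝ)) ≤ sq2 * (N:ℝ) :=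
          mul_le_mul_of_nonneg_left hP2 sp.le
        rw [hdcast, hknv, hxv] at hkey
        linarith [hkey, hsPR2, hHmR]
    · -- n odd : quick contradiction, x + y > 2H
      have hsq' : 2*(N:ℝ)^2 = (H:ℝ)^2 + 1 := by rw [hod.neg_one_pow] at hsq; linarith
      have h1 : 2*(H:ℝ) < 2*sq2*(N:ℝ) := by
        have : (H:ℝ) < sq2*(N:ℝ) := by
          apply lt_of_sq_lt' (by linarith) hsN0
          rw [e1]; linarith
        linarith
      linarith
  · exact hgoal
  · -- k + l = 2H : impossible
    exfalso
    have hklR : (k:ℝ) + (l:ℝ) = 2*(H:ℝ) := by exact_mod_cast congrArg (Int.cast : ℤ → ℝ) hE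
    rcases Nat.even_or_odd n with hev | hod
    · -- n even : x + y < 2H but x + y > k + l
      have hsq' : 2*(N:ℝ)^2 = (H:ℝ)^2 - 1 := by rw [hev.neg_one_pow] at hsq; linarith
      have h1 : 2*sq2*(N:ℝ) < 2*(H:ℝ) := by
        have : sq2*(N:ℝ) < (H:ℝ) := by
          apply lt_of_sq_lt' hsN0 (by linarith)
          rw [e1]; linarith
        linarith
      linarith
    · -- n odd : 2N² = H² + 1
      have hsq' : 2*(N:ℝ)^2 = (H:ℝ)^2 + 1 := by rw [hod.neg_one_pow] at hsq; linarith
      have hx_close : x - (k:ℝ) < 2*sq2*(N:ℝ) - 2*(H:ℝ) := by linarith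
      have hx_pos : 0 < x - (k:ℝ) := by linarith
      have hprod : (2*sq2*(N:ℝ) - 2*(H:ℝ)) * (sq2*(N:ℝ) + (H:ℝ)) = 2 := by
        linear_combination (2*(N:ℝ)^2) * s2 + 2*hsq'
      set d : ℤ := 8*(j:ℤ)^2 - k^2 with hd
      have hd1 : 1 ≤ d := by
        have h1 : (k:ℝ)^2 < x^2 := by nlinarith
        rw [hx2] at h1
        have h2 : ((k:ℤ):ℝ)^2 < 8*((j:ℤ):ℝ)^2 := by push_cast; push_cast at h1; linarith
        have h3 : k^2 < 8*(j:ℤ)^2 := by exact_mod_cast h2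
        rw [hd]; linarith
      have hdR : (d:ℝ) = (x - (k:ℝ)) * (x + (k:ℝ)) := by
        have h1 : (d:ℝ) = 8*(j:ℝ)^2 - (k:ℝ)^2 := by rw [hd]; push_cast; ring
        rw [h1, ← hx2]; ring
      have hpos1' : (0:ℝ) < sq2*(N:ℝ) + (H:ℝ) := by linarith
      have hkey : (d:ℝ) * (sq2*(N:ℝ) + (H:ℝ)) < 2 * (x + (k:ℝ)) := by
        have h1 : (x - (k:ℝ)) * (sq2*(N:ℝ) + (H:ℝ))
            < (2*sq2*(N:ℝ) - 2*(H:ℝ)) * (sq2*(N:ℝ) + (H:ℝ)) :=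
          mul_lt_mul_of_pos_right (by linarith) hpos1'
        rw [hprod] at h1
        have hpos2 : (0:ℝ) < x + (k:ℝ) := by linarith
        calc (d:ℝ) * (sq2*(N:ℝ) + (H:ℝ))
            = ((x - (k:ℝ)) * (sq2*(N:ℝ) + (H:ℝ))) * (x + (k:ℝ)) := by rw [hdR]; ring
          _ < 2 * (x + (k:ℝ)) := mul_lt_mul_of_pos_right h1 hpos2
      have hd4 : d ≤ 4 := by
        by_contra hcon
        push_neg at hcon
        have h5 : (5:ℝ) ≤ (d:ℝ) := by exact_mod_cast hcon
        have h6 : 5 * (sq2*(N:ℝ) + (H:ℝ)) ≤ (d:ℝ) * (sq2*(N:ℝ) + (H:ℝ)) :=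
          mul_le_mul_of_nonneg_right h5 hpos1'.le
        linarith [hkey, hxub, hlb]
      rcases Int.even_or_odd k with ⟨t, ht⟩ | ⟨t, ht⟩
      · -- k = 2t, d = 4(2j² - t²) → d = 4, t² + 1 = 2j²
        have ht' : k = 2*t := by omega
        set u : ℤ := 2*(j:ℤ)^2 - t^2 with hu
        have hdu : d = 4*u := by rw [hd, ht', hu]; ring
        have hu1 : u = 1 := by omega
        have ht2 : (t:ℤ)^2 + 1 = 2*(j:ℤ)^2 := by rw [hu] at hu1; linarith
        have ht0 : 0 ≤ t := by omega
        obtain ⟨tn, rfl⟩ := Int.eq_ofNat_of_zero_le ht0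
        have heqn : tn*tn + 1 = 2*(j*j) := by
          have hZ : ((tn:ℤ))*tn + 1 = 2*((j:ℤ)*(j:ℤ)) := by linear_combination ht2
          exact_mod_cast hZ
        obtain ⟨m, hmo, htm, hjm⟩ := (pell_classify j tn hj1).2 heqn
        have hm1 : 1 ≤ m := by
          obtain ⟨c, hc⟩ := hmo; omega
        have hmn : m < n := by
          by_contra hcc
          push_neg at hcc
          have := pell_mono hcc
          omega
        have hP : 2 * pell m ≤ N := two_pell_le_of_lt hmn
        have hHm : 2 * Hc m ≤ H := two_Hc_le_of_lt hm1 hmn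
        have hdcast : (d:ℝ) = 4 := by
          have hd4' : d = 4 := by omega
          rw [hd4']; norm_num
        have hkv : (k:ℝ) = 2*((Hc m : ℕ):ℝ) := by
          rw [ht', htm]; push_cast; ring
        have hxv : x = 2*sq2*((pell m : ℕ):ℝ) := by
          rw [hx, hjm]; push_cast; ring
        have hPR : 2*((pell m : ℕ):ℝ) ≤ (N:ℝ) := by exact_mod_cast hP
        have hHmR : 2*((Hc m : ℕ):ℝ) ≤ (H:ℝ) := by exact_mod_cast hHm
        have hsPR : sq2 * (2*((pell m : ℕ):ℝ)) ≤ sq2 * (N:ℝ) :=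
          mul_le_mul_of_nonneg_left hPR sp.le
        rw [hdcast, hkv, hxv] at hkey
        linarith [hkey, hsPR, hHmR, hpos1']
      · -- k = 2t+1 : d ≡ 7 mod 8, impossible
        obtain ⟨v, hv⟩ := Int.even_mul_succ_self t
        set w : ℤ := (j:ℤ)^2 with hw
        have hdw : d = 8*w - 8*v - 1 := by
          rw [hd, ht]; linear_combination (-4)*hv + 8*hw
        omega

lemma pell_parity (n : ℕ) : pell n % 2 = n % 2 := by
  induction n using Nat.strong_induction_on with
  | _ n IH =>
    match n with
    | 0 => rfl
    | 1 => rfl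
    | (m+2) =>
        have h1 := IH m (by omega)
        show (2 * pell (m+1) + pell m) % 2 = (m+2) % 2
        omega

/-- floor of the walk argument at `pell n`, `n` odd. -/
lemma floor_end_odd {n : ℕ} (hn : 1 ≤ n) (ho : Odd n) :
    ⌊(pell n : ℝ) * (2*sq2)⌋ = 2 * (Hc n : ℤ) := by
  have s2 := sq2_sq
  have sp := sq2_pos
  have hsq : ((Hc n : ℝ))^2 = 2*((pell n : ℝ))^2 - 1 := by
    have h2 : ((Hc n : ℤ):ℝ)^2 = ((2 * (pell n : ℤ)^2 + (-1)^n : ℤ):ℝ) := by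
      exact_mod_cast congrArg (Int.cast : ℤ → ℝ) (Hc_sq n)
    rw [ho.neg_one_pow] at h2
    push_cast at h2; push_cast; linarith
  have hH1 : (1:ℝ) ≤ ((Hc n : ℕ):ℝ) := by
    have : 1 ≤ Hc n := by
      have : Hc 0 ≤ Hc n := Hc_mono (by omega)
      simpa [Hc] using this
    exact_mod_cast this
  have hx : (0:ℝ) ≤ (pell n : ℝ) * (2*sq2) := by positivity
  rw [Int.floor_eq_iff]
  constructor
  · -- 2H ≤ 2√2 P : (2H)² = 4H² = 8P² - 4 ≤ 8P² = (2√2P)²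
    push_cast
    have h1 : (2*((Hc n:ℕ):ℝ))^2 ≤ (((pell n:ℕ):ℝ) * (2*sq2))^2 := by
      have e : (((pell n:ℕ):ℝ) * (2*sq2))^2 = 8*((pell n:ℕ):ℝ)^2 := by
        linear_combination (4*((pell n:ℕ):ℝ)^2) * s2
      rw [e]; nlinarith [hsq]
    nlinarith [h1, hx, hH1]
  · -- 2√2 P < 2H + 1
    push_cast
    apply lt_of_sq_lt' hx (by linarith)
    have e : (((pell n:ℕ):ℝ) * (2*sq2))^2 = 8*((pell n:ℕ):ℝ)^2 := by
      linear_combination (4*((pell n:ℕ):ℝ)^2) * s2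
    rw [e]; nlinarith [hsq, hH1]

lemma floor_end_even {n : ℕ} (hn : 2 ≤ n) (he : Even n) :
    ⌊(pell n : ℝ) * (2*sq2)⌋ = 2 * (Hc n : ℤ) - 1 := by
  have s2 := sq2_sq
  have sp := sq2_pos
  have hsq : ((Hc n : ℝ))^2 = 2*((pell n : ℝ))^2 + 1 := by
    have h2 : ((Hc n : ℤ):ℝ)^2 = ((2 * (pell n : ℤ)^2 + (-1)^n : ℤ):ℝ) := by
      exact_mod_cast congrArg (Int.cast : ℤ → ℝ) (Hc_sq n)
    rw [he.neg_one_pow] at h2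
    push_cast at h2; push_cast; linarith
  have hH3 : (3:ℝ) ≤ ((Hc n : ℕ):ℝ) := by
    have : 3 ≤ Hc n := by
      have h := Hc_mono hn
      have : Hc 2 = 3 := by simp [Hc, pell]
      omega
    exact_mod_cast this
  have hx : (0:ℝ) ≤ (pell n : ℝ) * (2*sq2) := by positivity
  have e : (((pell n:ℕ):ℝ) * (2*sq2))^2 = 8*((pell n:ℕ):ℝ)^2 := by
    linear_combination (4*((pell n:ℕ):ℝ)^2) * s2
  rw [Int.floor_eq_iff]
  constructor
  · push_cast
    have h1 : (2*((Hc n:ℕ):ℝ) - 1)^2 ≤ (((pell n:ℕ):ℝ) * (2*sq2))^2 := by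
      rw [e]; nlinarith [hsq]
    nlinarith [h1, hx, hH3]
  · push_cast
    apply lt_of_sq_lt' hx (by linarith)
    rw [e]; nlinarith [hsq, hH3]

lemma floor_mid {n : ℕ} (hn : 2 ≤ n) (he : Even n) :
    ⌊((pell n / 2 : ℕ) : ℝ) * (2*sq2)⌋ = (Hc n : ℤ) - 1 := by
  have s2 := sq2_sq
  have sp := sq2_pos
  have hp2 : 2 * (pell n / 2) = pell n := by
    have h1 := pell_parity n
    have h2 : n % 2 = 0 := Nat.even_iff.1 he
    omega
  have hsq : ((Hc n : ℝ))^2 = 2*((pell n : ℝ))^2 + 1 := by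
    have h2 : ((Hc n : ℤ):ℝ)^2 = ((2 * (pell n : ℤ)^2 + (-1)^n : ℤ):ℝ) := by
      exact_mod_cast congrArg (Int.cast : ℤ → ℝ) (Hc_sq n)
    rw [he.neg_one_pow] at h2
    push_cast at h2; push_cast; linarith
  have hH3 : (3:ℝ) ≤ ((Hc n : ℕ):ℝ) := by
    have : 3 ≤ Hc n := by
      have h := Hc_mono hn
      have : Hc 2 = 3 := by simp [Hc, pell]
      omega
    exact_mod_cast this
  have hxval : ((pell n / 2 : ℕ) : ℝ) * (2*sq2) = sq2 * ((pell n : ℕ):ℝ) := by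
    have : ((pell n : ℕ):ℝ) = 2 * ((pell n / 2 : ℕ):ℝ) := by exact_mod_cast hp2.symm
    rw [this]; ring
  have hx : (0:ℝ) ≤ ((pell n / 2 : ℕ) : ℝ) * (2*sq2) := by positivity
  have e : (sq2 * ((pell n : ℕ):ℝ))^2 = 2*((pell n:ℕ):ℝ)^2 := by
    linear_combination (((pell n:ℕ):ℝ)^2) * s2
  rw [hxval, Int.floor_eq_iff]
  constructor
  · push_cast
    have h1 : (((Hc n:ℕ):ℝ) - 1)^2 ≤ (sq2 * ((pell n : ℕ):ℝ))^2 := by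
      rw [e]; nlinarith [hsq]
    nlinarith [h1, hxval ▸ hx, hH3]
  · push_cast
    apply lt_of_sq_lt' (hxval ▸ hx) (by linarith)
    rw [e]; nlinarith [hsq, hH3]

-- the ±1 step function
noncomputable def aa (j : ℕ) : ℤ := ((Int.negOnePow ⌊(j : ℝ) * (2*sq2)⌋ : ℤˣ) : ℤ)

lemma aa_pair {n j : ℕ} (hn : 2 ≤ n) (hj1 : 1 ≤ j) (hj2 : j < pell n)
    (hj3 : 2*j ≠ pell n) : aa j + aa (pell n - j) = 0 := by
  have hsum := key_pair hn hj1 hj2 hj3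
  have hodd : Odd (⌊(j:ℝ) * (2*sq2)⌋ + ⌊((pell n - j : ℕ):ℝ) * (2*sq2)⌋) := by
    rw [hsum]; exact ⟨(Hc n : ℤ) - 1, by ring⟩
  have hmul := Int.negOnePow_add ⌊(j:ℝ) * (2*sq2)⌋ ⌊((pell n - j : ℕ):ℝ) * (2*sq2)⌋
  rw [Int.negOnePow_odd _ hodd] at hmul
  unfold aa
  rcases Int.units_eq_one_or (Int.negOnePow ⌊(j:ℝ) * (2*sq2)⌋) with h1 | h1 <;>
    rcases Int.units_eq_one_or (Int.negOnePow ⌊((pell n - j : ℕ):ℝ) * (2*sq2)⌋) with h2 | h2 <;>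
    rw [h1, h2] at hmul ⊢ <;> revert hmul <;> decide

lemma aa_end_odd {n : ℕ} (hn : 1 ≤ n) (ho : Odd n) : aa (pell n) = 1 := by
  unfold aa
  rw [floor_end_odd hn ho, Int.negOnePow_even _ ⟨(Hc n : ℤ), by ring⟩]
  rfl

lemma aa_end_even {n : ℕ} (hn : 2 ≤ n) (he : Even n) : aa (pell n) = -1 := by
  unfold aa
  rw [floor_end_even hn he, Int.negOnePow_odd _ ⟨(Hc n : ℤ) - 1, by ring⟩]
  rfl

lemma aa_mid {n : ℕ} (hn : 2 ≤ n) (he : Even n) : aa (pell n / 2) = 1 := by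
  unfold aa
  rw [floor_mid hn he]
  have h := Hc_odd n
  have : Odd (Hc n) := Nat.odd_iff.2 h
  obtain ⟨c, hc⟩ := this
  rw [Int.negOnePow_even _ ⟨(c:ℤ), by push_cast [hc]; ring⟩]
  rfl

theorem main_sum (n : ℕ) (hn : 1 ≤ n) :
    (Odd n → ∑ j ∈ Finset.Icc 1 (pell n), aa j = 1) ∧
    (Even n → ∑ j ∈ Finset.Icc 1 (pell n), aa j = 0) := by
  obtain ⟨M, hM⟩ : ∃ M, pell n = M + 1 := ⟨pell n - 1, by have := pell_pos hn; omega⟩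
  have hsplit : ∑ j ∈ Finset.Icc 1 (pell n), aa j
      = (∑ j ∈ Finset.Icc 1 M, aa j) + aa (pell n) := by
    rw [hM, Finset.sum_Icc_succ_top (by omega)]
  have hrange : ∑ j ∈ Finset.Icc 1 M, aa j = ∑ i ∈ Finset.range M, aa (1 + i) := by
    rw [← Finset.Ico_add_one_right_eq_Icc, Finset.sum_Ico_eq_sum_range]
    try simp
  have hreflect : ∑ i ∈ Finset.range M, aa (pell n - (1 + i))
      = ∑ i ∈ Finset.range M, aa (1 + i) := by
    rw [← Finset.sum_range_reflect (fun i => aa (1 + i)) M]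
    apply Finset.sum_congr rfl
    intro i hi
    have hi' := Finset.mem_range.1 hi
    congr 1
    omega
  have h2T : (∑ j ∈ Finset.Icc 1 M, aa j) + (∑ j ∈ Finset.Icc 1 M, aa j)
      = ∑ i ∈ Finset.range M, (aa (1 + i) + aa (pell n - (1 + i))) := by
    rw [hrange]
    nth_rewrite 2 [← hreflect]
    rw [← Finset.sum_add_distrib]
  constructor
  · intro ho
    have hzero : ∑ i ∈ Finset.range M, (aa (1 + i) + aa (pell n - (1 + i))) = 0 := by
      apply Finset.sum_eq_zero
      intro i hi
      have hi' := Finset.mem_range.1 hi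
      have hn2 : 2 ≤ n := by
        by_contra hc
        have : n = 1 := by omega
        rw [this] at hM
        have : pell 1 = 1 := rfl
        omega
      apply aa_pair hn2 (by omega) (by omega)
      have hp := pell_parity n
      have := Nat.odd_iff.1 ho
      omega
    have hT : ∑ j ∈ Finset.Icc 1 M, aa j = 0 := by
      have := h2T.trans hzero
      omega
    rw [hsplit, hT, aa_end_odd hn ho]
    norm_num
  · intro he
    have hn2 : 2 ≤ n := by
      have := Nat.even_iff.1 he
      omega
    have hNeven : pell n % 2 = 0 := by
      have hp := pell_parity n
      have := Nat.even_iff.1 he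
      omega
    have hN2 : 2 ≤ pell n := by
      have : pell 2 ≤ pell n := pell_mono hn2
      have : pell 2 = 2 := rfl
      omega
    set i0 : ℕ := pell n / 2 - 1 with hi0
    have htwo : ∑ i ∈ Finset.range M, (aa (1 + i) + aa (pell n - (1 + i))) = 2 := by
      rw [Finset.sum_eq_single_of_mem i0 (Finset.mem_range.2 (by omega))]
      · have h1 : 1 + i0 = pell n / 2 := by omega
        have h2 : pell n - (1 + i0) = pell n / 2 := by omega
        rw [h2, h1, aa_mid hn2 he]
        norm_num
      · intro i hi hne
        have hi' := Finset.mem_range.1 hi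
        apply aa_pair hn2 (by omega) (by omega)
        omega
    have hT : ∑ j ∈ Finset.Icc 1 M, aa j = 1 := by
      have := h2T.trans htwo
      omega
    rw [hsplit, hT, aa_end_even hn2 he]
    ring


/-- Rule A. -/
theorem stmt_8 (n : ℕ) (hn : 1 ≤ n) :
    (Odd n → S (2 * Real.sqrt 2) (pell n) = 1) ∧
    (Even n → S (2 * Real.sqrt 2) (pell n) = 0) := by
  have hS : S (2 * Real.sqrt 2) (pell n) = ∑ j ∈ Finset.Icc 1 (pell n), aa j := rfl
  have h := main_sum n hn
  exact ⟨fun ho => hS ▸ h.1 ho, fun he => hS ▸ h.2 he⟩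
end Real
end

section
/- Let n ≥ 1 and let q = P_{2n} (an even Pell number). Then S_{q/2 + k}(2√2) = S_{q/2}(2√2) − S_k(2√2) for all integers k with 0 ≤ k ≤ q/2. -/
/-- The half-companion Pell numbers. -/
def hpell : ℕ → ℕ
  | 0 => 1
  | n + 1 => hpell n + 2 * pell n

lemma pell_succ_eq (m : ℕ) : pell (m + 1) = hpell m + pell m := by
  induction m with
  | zero => rfl
  | succ k ih =>
    show pell (k + 2) = hpell (k + 1) + pell (k + 1)
    rw [pell, hpell]
    omega

lemma hpell_odd (m : ℕ) : hpell m % 2 = 1 := by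
  induction m with
  | zero => rfl
  | succ k ih => rw [hpell]; omega

lemma pell_even (m : ℕ) : pell (2 * m) % 2 = 0 := by
  induction m with
  | zero => rfl
  | succ k ih =>
    have : 2 * (k + 1) = 2 * k + 2 := by ring
    rw [this, pell]
    omega

lemma pell_one_le (m : ℕ) : 1 ≤ pell (m + 1) := by
  induction m with
  | zero => decide
  | succ k ih =>
    show 1 ≤ pell (k + 2)
    rw [pell]
    omega

lemma hpell_sq (m : ℕ) : (hpell m : ℤ) ^ 2 = 2 * (pell m : ℤ) ^ 2 + (-1) ^ m := by
  induction m with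
  | zero => norm_num [hpell, pell]
  | succ k ih =>
    have h1 : (pell (k + 1) : ℤ) = hpell k + pell k := by exact_mod_cast pell_succ_eq k
    have h2 : (hpell (k + 1) : ℤ) = hpell k + 2 * pell k := by
      rw [hpell]; push_cast; ring
    rw [h1, h2, pow_succ]
    linear_combination -ih

lemma sq2_floor_key (q H : ℕ) (hq : 1 ≤ q) (hH : (H : ℤ) ^ 2 = 2 * (q : ℤ) ^ 2 + 1)
    (a : ℕ) (ha2 : a % 2 = 0) (ha1 : 1 ≤ a) (haq : a ≤ q) :
    ⌊Real.sqrt 2 * ((a : ℝ) + q)⌋ = ⌊Real.sqrt 2 * a⌋ + H := by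
  set s := Real.sqrt 2 with hs
  have hs2 : s ^ 2 = 2 := Real.sq_sqrt (by norm_num)
  have hs0 : (0 : ℝ) < s := Real.sqrt_pos.mpr (by norm_num)
  have ha0 : (0 : ℝ) < a := by exact_mod_cast ha1
  have haq' : (a : ℝ) ≤ q := by exact_mod_cast haq
  set m : ℤ := ⌊s * a⌋ with hm
  have hm0 : 0 ≤ m := Int.floor_nonneg.mpr (by positivity)
  have hmle : (m : ℝ) ≤ s * a := Int.floor_le _
  have hirr : Irrational (s * a) := irrational_sqrt_two.mul_natCast (by omega)
  have hlt : (m : ℝ) < s * a := lt_of_le_of_ne hmle (fun h => hirr.ne_int m h.symm)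
  have hup : s * a < m + 1 := Int.lt_floor_add_one _
  -- d = 2a² - m² ≥ 3
  have hdR : (s * a - m) * (s * a + m) = 2 * (a : ℝ) ^ 2 - (m : ℝ) ^ 2 := by
    have : (s * a - m) * (s * a + m) = s ^ 2 * a ^ 2 - m ^ 2 := by ring
    rw [this, hs2]
  have hd0 : (m : ℤ) ^ 2 < 2 * (a : ℤ) ^ 2 := by
    have hmr : (0 : ℝ) ≤ (m : ℝ) := by exact_mod_cast hm0
    have hmm : (m : ℝ) * (m : ℝ) < (s * a) * (s * a) := mul_self_lt_mul_self hmr hlt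
    have hss : (s * (a:ℝ)) * (s * a) = 2 * (a : ℝ) ^ 2 := by
      rw [show (s * (a:ℝ)) * (s * a) = s ^ 2 * (a:ℝ) ^ 2 from by ring, hs2]
    have h1 : (m : ℝ) ^ 2 < 2 * (a : ℝ) ^ 2 := by nlinarith [hmm, hss]
    exact_mod_cast h1
  obtain ⟨b, hb⟩ : ∃ b : ℕ, a = 2 * b := ⟨a / 2, by omega⟩
  have hd1 : 2 * (a : ℤ) ^ 2 - m ^ 2 ≠ 1 := by
    intro h
    have hz : ((m : ZMod 8)) ^ 2 = 7 := by
      have : (m : ℤ) ^ 2 = 8 * (b : ℤ) ^ 2 - 1 := by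
        rw [hb] at h; push_cast at h ⊢; linarith
      calc ((m : ZMod 8)) ^ 2 = ((m ^ 2 : ℤ) : ZMod 8) := by push_cast; ring
        _ = ((8 * (b : ℤ) ^ 2 - 1 : ℤ) : ZMod 8) := by rw [this]
        _ = 7 := by push_cast; rw [show ((8 : ZMod 8)) = 0 by decide]; ring_nf; decide
    revert hz
    have : ∀ x : ZMod 8, x ^ 2 ≠ 7 := by decide
    exact this _
  have hd2 : 2 * (a : ℤ) ^ 2 - m ^ 2 ≠ 2 := by
    intro h
    have hz : ((m : ZMod 8)) ^ 2 = 6 := by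
      have : (m : ℤ) ^ 2 = 8 * (b : ℤ) ^ 2 - 2 := by
        rw [hb] at h; push_cast at h ⊢; linarith
      calc ((m : ZMod 8)) ^ 2 = ((m ^ 2 : ℤ) : ZMod 8) := by push_cast; ring
        _ = ((8 * (b : ℤ) ^ 2 - 2 : ℤ) : ZMod 8) := by rw [this]
        _ = 6 := by push_cast; rw [show ((8 : ZMod 8)) = 0 by decide]; ring_nf; decide
    revert hz
    have : ∀ x : ZMod 8, x ^ 2 ≠ 6 := by decide
    exact this _
  have hd3 : 3 ≤ 2 * (a : ℤ) ^ 2 - m ^ 2 := by omega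
  have hd3R : (3 : ℝ) ≤ (s * a - m) * (s * a + m) := by
    rw [hdR]
    have : (3 : ℝ) ≤ 2 * (a : ℝ) ^ 2 - (m : ℝ) ^ 2 := by exact_mod_cast hd3
    linarith
  -- H > s q
  have hHq : s * q < H := by
    have hHR : (H : ℝ) ^ 2 = 2 * (q : ℝ) ^ 2 + 1 := by exact_mod_cast hH
    nlinarith [Nat.cast_nonneg (α := ℝ) H, sq_nonneg ((H : ℝ) - s * q)]
  have hBe : ((H : ℝ) - s * q) * ((H : ℝ) + s * q) = 1 := by
    have hHR : (H : ℝ) ^ 2 = 2 * (q : ℝ) ^ 2 + 1 := by exact_mod_cast hH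
    have : ((H : ℝ) - s * q) * ((H : ℝ) + s * q) = (H : ℝ) ^ 2 - s ^ 2 * q ^ 2 := by ring
    rw [this, hs2, hHR]; ring
  have hsaq : s * a ≤ s * q := by nlinarith
  -- lower bound
  have hlow : (m : ℝ) + H < s * ((a : ℝ) + q) := by
    by_contra hcon
    push_neg at hcon
    have hc : s * a - m ≤ (H : ℝ) - s * q := by
      have : s * ((a : ℝ) + q) = s * a + s * q := by ring
      linarith [this ▸ hcon]
    have hB : (0 : ℝ) < (H : ℝ) - s * q := by linarith
    have hpos : (0 : ℝ) < s * a + m := by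
      have : (0 : ℝ) ≤ (m : ℝ) := by exact_mod_cast hm0
      nlinarith
    have hsum : s * a + m < (H : ℝ) + s * q := by
      have hmH : (m : ℝ) < H := by linarith
      linarith
    have h1 : (s * a - m) * (s * a + m) ≤ ((H : ℝ) - s * q) * (s * a + m) :=
      mul_le_mul_of_nonneg_right hc (le_of_lt hpos)
    have h2 : ((H : ℝ) - s * q) * (s * a + m) < ((H : ℝ) - s * q) * ((H : ℝ) + s * q) :=
      mul_lt_mul_of_pos_left hsum hB
    linarith
  have hhigh : s * ((a : ℝ) + q) < (m : ℝ) + H + 1 := by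
    have : s * ((a : ℝ) + q) = s * a + s * q := by ring
    linarith [this]
  rw [Int.floor_eq_iff]
  constructor
  · push_cast; linarith
  · push_cast; linarith

theorem stmt_14 (n : ℕ) (hn : 1 ≤ n) (k : ℕ) (hk : k ≤ pell (2 * n) / 2) :
    S (2 * Real.sqrt 2) (pell (2 * n) / 2 + k) =
      S (2 * Real.sqrt 2) (pell (2 * n) / 2) - S (2 * Real.sqrt 2) k := by
  set ξ := 2 * Real.sqrt 2 with hξ
  set q := pell (2 * n) with hqdef
  set H := hpell (2 * n) with hHdef
  have hq2 : q % 2 = 0 := pell_even n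
  have hq1 : 1 ≤ q := by
    have := pell_one_le (2 * n - 1)
    have h2n : 2 * n - 1 + 1 = 2 * n := by omega
    rw [h2n] at this
    exact this
  set h := q / 2 with hhdef
  have hh2 : 2 * h = q := by omega
  have hHsq : (H : ℤ) ^ 2 = 2 * (q : ℤ) ^ 2 + 1 := by
    have := hpell_sq (2 * n)
    rwa [pow_mul, neg_one_sq, one_pow] at this
  have hHo : H % 2 = 1 := hpell_odd (2 * n)
  -- key term identity
  have hterm : ∀ j : ℕ, 1 ≤ j → j ≤ h →
      ((Int.negOnePow ⌊((h + j : ℕ) : ℝ) * ξ⌋ : ℤˣ) : ℤ) =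
        -((Int.negOnePow ⌊(j : ℝ) * ξ⌋ : ℤˣ) : ℤ) := by
    intro j hj1 hjh
    have hfl : ⌊((h + j : ℕ) : ℝ) * ξ⌋ = ⌊(j : ℝ) * ξ⌋ + H := by
      have e1 : ((h + j : ℕ) : ℝ) * ξ = Real.sqrt 2 * (((2 * j : ℕ) : ℝ) + q) := by
        rw [hξ]
        push_cast
        rw [← hh2]
        push_cast
        ring
      have e2 : (j : ℝ) * ξ = Real.sqrt 2 * ((2 * j : ℕ) : ℝ) := by
        rw [hξ]; push_cast; ring
      rw [e1, e2]
      exact sq2_floor_key q H hq1 hHsq (2 * j) (by omega) (by omega) (by omega)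
    rw [hfl, Int.negOnePow_add, Int.negOnePow_odd (H : ℤ) (by
      refine ⟨(H - 1) / 2, ?_⟩
      omega)]
    push_cast [Units.val_mul]
    ring
  have hIcc : ∀ N : ℕ, Finset.Icc 1 N = Finset.Ioc 0 N := fun N => by ext x; simp only [Finset.mem_Icc, Finset.mem_Ioc]; omega
  have hsplit : S ξ (h + k) = S ξ h + ∑ j ∈ Finset.Ioc h (h + k),
      ((Int.negOnePow ⌊(j : ℝ) * ξ⌋ : ℤˣ) : ℤ) := by
    rw [S, S, hIcc, hIcc]
    exact (Finset.sum_Ioc_consecutive _ (Nat.zero_le h) (Nat.le_add_right h k)).symm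
  have hre : ∑ j ∈ Finset.Ioc h (h + k), ((Int.negOnePow ⌊(j : ℝ) * ξ⌋ : ℤˣ) : ℤ)
      = - S ξ k := by
    have hmap : Finset.Ioc h (h + k) =
        (Finset.Ioc 0 k).map (addLeftEmbedding h) := by
      rw [Finset.map_add_left_Ioc, add_zero]
    rw [hmap, Finset.sum_map, S, hIcc, ← Finset.sum_neg_distrib]
    apply Finset.sum_congr rfl
    intro j hj
    rw [Finset.mem_Ioc] at hj
    have : addLeftEmbedding h j = h + j := rfl
    rw [this]
    exact hterm j hj.1 (le_trans hj.2 hk)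
  rw [hsplit, hre]
  ring
end
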